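/- For l = 1,...,n−1, in ℂG̃_n one has j̃_l s_l s_{l+1} ⋯ s_{n−1} = s_l s_{l+1} ⋯ s_{n−1} j̃_n − Σ_{k=l}^{n−1} (s_l s_{l+1} ⋯ ŝ_k ⋯ s_{n−1}) e_{k,n}, where s_l ⋯ ŝ_k ⋯ s_{n−1} denotes the product s_l s_{l+1} ⋯ s_{n−1} with the factor s_k omitted. -/

import Mathlib

/-- The action of the symmetric group `S_n` on `G^n` permuting the copies of `G`. -/
def permHom (n : ℕ) (G : Type) [Group G] : Equiv.Perm (Fin n) →* MulAut (Fin n → G) where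
  toFun σ :=
    { Equiv.arrowCongr σ (Equiv.refl G) with
      map_mul' := fun _ _ => rfl }
  map_one' := MulEquiv.ext fun _ => rfl
  map_mul' := fun _ _ => MulEquiv.ext fun _ => rfl

/-- The wreath product `G̃_n = G^n ⋊ S_n` of `G` by the symmetric group. -/
abbrev Wreath (n : ℕ) (G : Type) [Group G] :=
  SemidirectProduct (Fin n → G) (Equiv.Perm (Fin n)) (permHom n G)

noncomputable section

/-- The element `s_a` of `ℂG̃_n`: the simple transposition of `a` and `a+1`
(0-based indexing) in the symmetric-group part.  (Junk value `1` out of range.) -/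
def sE (n : ℕ) (G : Type) [Group G] (a : ℕ) : MonoidAlgebra ℂ (Wreath n G) :=
  if h : a + 1 < n then
    MonoidAlgebra.of ℂ (Wreath n G)
      (SemidirectProduct.inr (Equiv.swap ⟨a, Nat.lt_of_succ_lt h⟩ ⟨a + 1, h⟩))
  else 1

/-- The element `e_{i,j} = (1/|G|) Σ_{g ∈ G} g_i g_j⁻¹` of `ℂG̃_n` (0-based indexing),
where `g_i` is the image of `g` in the `i`-th copy of `G`.  (Junk value `1` out of range;
note `e_{i,i} = 1`.) -/
def eE (n : ℕ) (G : Type) [Group G] [Fintype G] (i j : ℕ) : MonoidAlgebra ℂ (Wreath n G) :=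
  if h : i < n ∧ j < n then
    ((Fintype.card G : ℂ))⁻¹ • ∑ g : G,
      MonoidAlgebra.of ℂ (Wreath n G)
        (SemidirectProduct.inl (Pi.mulSingle ⟨i, h.1⟩ g * Pi.mulSingle ⟨j, h.2⟩ g⁻¹))
  else 1

/-- The image `g_l` in `ℂG̃_n` of an element `g ∈ G` placed in the `l`-th copy of `G`
(0-based indexing; junk value `1` out of range). -/
def gE (n : ℕ) (G : Type) [Group G] (l : ℕ) (g : G) : MonoidAlgebra ℂ (Wreath n G) :=
  if h : l < n then
    MonoidAlgebra.of ℂ (Wreath n G) (SemidirectProduct.inl (Pi.mulSingle ⟨l, h⟩ g))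
  else 1

/-- The image `g_i^{(α)}` in `ℂG̃_n` of the normalized class sum
`g^{(α)} = (1/|C_α|) Σ_{g ∈ C_α} g` placed in the `i`-th copy of `G`
(0-based indexing; junk value `1` out of range). -/
def gClassE (n : ℕ) (G : Type) [Group G] [Fintype G] (i : ℕ) (c : ConjClasses G) :
    MonoidAlgebra ℂ (Wreath n G) :=
  if h : i < n then
    (((Set.toFinite (ConjClasses.carrier c)).toFinset.card : ℂ))⁻¹ •
      ∑ g ∈ (Set.toFinite (ConjClasses.carrier c)).toFinset,
        MonoidAlgebra.of ℂ (Wreath n G) (SemidirectProduct.inl (Pi.mulSingle ⟨i, h⟩ g))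
  else 1

end

set_option linter.unusedSectionVars false

noncomputable section AuxJM

open SemidirectProduct

variable {n : ℕ} {G : Type} [Group G] [Fintype G]

lemma inl_mul_inr' (f : Fin n → G) (σ : Equiv.Perm (Fin n)) :
    (inl f : Wreath n G) * inr σ = inr σ * inl (f ∘ σ) := by
  apply SemidirectProduct.ext
  · rw [mul_left, mul_left, left_inl, right_inl, left_inr, right_inr, map_one, one_mul, left_inl]
    funext x
    show f x * 1 = f (σ (σ.symm x))
    rw [mul_one, Equiv.apply_symm_apply]
  · rw [mul_right, mul_right, right_inl, right_inr, right_inl, one_mul, mul_one]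

lemma mulSingle_comp (i : Fin n) (g : G) (σ : Equiv.Perm (Fin n)) :
    (Pi.mulSingle i g) ∘ σ = Pi.mulSingle (σ⁻¹ i) g := by
  funext x
  simp [Pi.mulSingle_apply, Function.comp, Equiv.apply_eq_iff_eq_symm_apply]

def eF (n : ℕ) (G : Type) [Group G] [Fintype G] (i j : Fin n) : MonoidAlgebra ℂ (Wreath n G) :=
  ((Fintype.card G : ℂ))⁻¹ • ∑ g : G,
      MonoidAlgebra.of ℂ (Wreath n G)
        (SemidirectProduct.inl (Pi.mulSingle i g * Pi.mulSingle j g⁻¹))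

lemma eE_eq (i j : ℕ) (hi : i < n) (hj : j < n) :
    eE n G i j = eF n G ⟨i, hi⟩ ⟨j, hj⟩ := by
  rw [eE, dif_pos ⟨hi, hj⟩]; rfl

lemma mulSingle_swap (i j : Fin n) (g : G) :
    (Pi.mulSingle i g : Fin n → G) * Pi.mulSingle j g⁻¹ =
      Pi.mulSingle j g⁻¹ * Pi.mulSingle i g := by
  funext x
  simp only [Pi.mul_apply, Pi.mulSingle_apply]
  split_ifs <;> simp_all

lemma eF_symm (i j : Fin n) : eF n G i j = eF n G j i := by
  unfold eF
  congr 1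
  rw [← Equiv.sum_comp (Equiv.inv G)]
  refine Finset.sum_congr rfl fun g _ => ?_
  rw [mulSingle_swap]
  simp [Equiv.inv_apply]

lemma eF_mul_inr (i j : Fin n) (σ : Equiv.Perm (Fin n)) :
    eF n G i j * MonoidAlgebra.of ℂ (Wreath n G) (inr σ) =
      MonoidAlgebra.of ℂ (Wreath n G) (inr σ) * eF n G (σ⁻¹ i) (σ⁻¹ j) := by
  unfold eF
  rw [smul_mul_assoc, mul_smul_comm, Finset.sum_mul, Finset.mul_sum]
  congr 1
  refine Finset.sum_congr rfl fun g _ => ?_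
  rw [← map_mul, ← map_mul, inl_mul_inr']
  have key : (Pi.mulSingle i g * Pi.mulSingle j g⁻¹) ∘ σ =
      (Pi.mulSingle (σ⁻¹ i) g : Fin n → G) * Pi.mulSingle (σ⁻¹ j) g⁻¹ := by
    funext x
    simp [mulSingle_comp, Pi.mul_apply, Function.comp, Pi.mulSingle_apply,
      Equiv.apply_eq_iff_eq_symm_apply]
  rw [key]

lemma sE_mul_self (a : ℕ) : sE n G a * sE n G a = 1 := by
  unfold sE
  split
  · rw [← map_mul, ← map_mul, Equiv.swap_mul_self, map_one, map_one]
  · rw [one_mul]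

lemma eE_symm (i j : ℕ) : eE n G i j = eE n G j i := by
  by_cases h : i < n ∧ j < n
  · rw [eE_eq i j h.1 h.2, eE_eq j i h.2 h.1, eF_symm]
  · rw [eE, dif_neg h, eE, dif_neg (fun hc => h ⟨hc.2, hc.1⟩)]

lemma eE_mul_sE_of_lt {i k : ℕ} (hik : i < k) (hk : k + 1 < n) :
    eE n G i k * sE n G k = sE n G k * eE n G i (k + 1) := by
  have hi : i < n := lt_trans (lt_trans hik (Nat.lt_succ_self k)) hk
  have hkn : k < n := Nat.lt_of_succ_lt hk
  rw [eE_eq i k hi hkn, eE_eq i (k+1) hi hk, sE, dif_pos hk, eF_mul_inr]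
  congr 2
  · rw [Equiv.swap_inv, Equiv.swap_apply_of_ne_of_ne]
    · exact fun hc => (Nat.ne_of_lt hik) (Fin.mk.injEq .. ▸ hc)
    · exact fun hc => (Nat.ne_of_lt (lt_trans hik (Nat.lt_succ_self k))) (Fin.mk.injEq .. ▸ hc)
  · rw [Equiv.swap_inv, Equiv.swap_apply_left]

lemma sE_comm_eE {k : ℕ} (hk : k + 1 < n) :
    sE n G k * eE n G k (k + 1) = eE n G k (k + 1) * sE n G k := by
  have hkn : k < n := Nat.lt_of_succ_lt hk
  rw [eE_eq k (k+1) hkn hk, sE, dif_pos hk, eF_mul_inr, Equiv.swap_inv,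
    Equiv.swap_apply_left, Equiv.swap_apply_right, eF_symm]

lemma eE_mul_prod : ∀ (m i q : ℕ), i < q → q + m < n →
    eE n G i q * ((List.range m).map (fun u => sE n G (q + u))).prod =
      ((List.range m).map (fun u => sE n G (q + u))).prod * eE n G i (q + m)
  | 0, i, q, _, _ => by simp
  | (m+1), i, q, hiq, hqm => by
    rw [List.range_succ_eq_map, List.map_cons, List.prod_cons, List.map_map]
    have hq1 : q + 1 < n := by omega
    have h1 : (fun u => sE n G (q + u)) ∘ Nat.succ = fun u => sE n G ((q + 1) + u) := by
      funext u
      have : q + Nat.succ u = q + 1 + u := by omega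
      simp only [Function.comp_apply, this]
    rw [h1, Nat.add_zero, ← mul_assoc, eE_mul_sE_of_lt hiq hq1, mul_assoc,
      eE_mul_prod m i (q+1) (by omega) (by omega), ← mul_assoc]
    have : q + 1 + m = q + (m + 1) := by omega
    rw [this]

lemma e1_lem (J : ℕ → MonoidAlgebra ℂ (Wreath n G))
    (hrec : ∀ i : ℕ, i + 1 < n →
      J (i + 1) = sE n G i * J i * sE n G i + eE n G i (i + 1) * sE n G i)
    (q : ℕ) (hq : q + 1 < n) :
    sE n G q * J (q + 1) = J q * sE n G q + eE n G q (q + 1) := by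
  rw [hrec q hq, mul_add, ← mul_assoc, ← mul_assoc, sE_mul_self, one_mul,
    ← mul_assoc, sE_comm_eE hq, mul_assoc, sE_mul_self, mul_one]

lemma main_aux (J : ℕ → MonoidAlgebra ℂ (Wreath n G))
    (hrec : ∀ i : ℕ, i + 1 < n →
      J (i + 1) = sE n G i * J i * sE n G i + eE n G i (i + 1) * sE n G i) :
    ∀ m : ℕ, ∀ p : ℕ, 1 ≤ m → p + m + 1 = n →
    J p * ((List.range m).map (fun u => sE n G (p + u))).prod =
      ((List.range m).map (fun u => sE n G (p + u))).prod * J (n - 1) -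
        ∑ t ∈ Finset.range m,
          ((List.range m).map (fun u => if u = t then 1 else sE n G (p + u))).prod *
            eE n G (p + t) (n - 1) := by
  intro m
  induction m with
  | zero => intro p h; omega
  | succ m ih =>
    intro p _ hpm
    have hp1 : p + 1 < n := by omega
    by_cases hm : m = 0
    · subst hm
      have hn1 : n - 1 = p + 1 := by omega
      rw [hn1, Finset.sum_range_one]
      rw [show List.range (0+1) = [0] from rfl]
      simp only [List.map_cons, List.map_nil, List.prod_cons, List.prod_nil, mul_one,
        Nat.add_zero, if_pos rfl, one_mul]
      rw [e1_lem J hrec p hp1]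
      simp only [if_true, one_mul]
      abel
    · -- inductive step
      have hcomp : (fun u => sE n G (p + u)) ∘ Nat.succ = fun u => sE n G (p + 1 + u) := by
        funext u
        have h : p + Nat.succ u = p + 1 + u := by omega
        simp only [Function.comp_apply, h]
      have hLp : ((List.range (m+1)).map (fun u => sE n G (p + u))).prod =
          sE n G p * ((List.range m).map (fun u => sE n G (p + 1 + u))).prod := by
        rw [List.range_succ_eq_map, List.map_cons, List.prod_cons, List.map_map, hcomp,
          Nat.add_zero]
      have hΩ0 : ((List.range (m+1)).map (fun u => if u = 0 then 1 else sE n G (p + u))).prod =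
          ((List.range m).map (fun u => sE n G (p + 1 + u))).prod := by
        rw [List.range_succ_eq_map, List.map_cons, List.prod_cons, List.map_map,
          if_pos rfl, one_mul]
        congr 1
        refine List.map_congr_left fun u _ => ?_
        have h : p + Nat.succ u = p + 1 + u := by omega
        simp only [Function.comp_apply, if_neg (Nat.succ_ne_zero u), h]
      have hΩs : ∀ t : ℕ,
          ((List.range (m+1)).map (fun u => if u = t + 1 then 1 else sE n G (p + u))).prod =
          sE n G p *
            ((List.range m).map (fun u => if u = t then 1 else sE n G (p + 1 + u))).prod := by
        intro t
        rw [List.range_succ_eq_map, List.map_cons, List.prod_cons, List.map_map,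
          if_neg (by omega : ¬ (0 = t + 1)), Nat.add_zero]
        congr 2
        refine List.map_congr_left fun u _ => ?_
        have h : p + Nat.succ u = p + 1 + u := by omega
        have h2 : (Nat.succ u = t + 1) = (u = t) := by simp [Nat.succ_eq_add_one]
        simp only [Function.comp_apply, h, h2]
      rw [hLp, Finset.sum_range_succ']
      have hsum : ∑ t ∈ Finset.range m,
          ((List.range (m+1)).map (fun u => if u = t + 1 then 1 else sE n G (p + u))).prod *
            eE n G (p + (t + 1)) (n - 1) =
          ∑ t ∈ Finset.range m, sE n G p *
            (((List.range m).map (fun u => if u = t then 1 else sE n G (p + 1 + u))).prod *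
              eE n G (p + 1 + t) (n - 1)) := by
        refine Finset.sum_congr rfl fun t _ => ?_
        rw [hΩs t, mul_assoc]
        have h : p + (t + 1) = p + 1 + t := by omega
        rw [h]
      rw [hsum, ← Finset.mul_sum, hΩ0, Nat.add_zero]
      have hIH := ih (p + 1) (by omega) (by omega)
      have hK : J p * sE n G p = sE n G p * J (p + 1) - eE n G p (p + 1) := by
        rw [e1_lem J hrec p hp1]; abel
      have hE : eE n G p (p + 1) *
          ((List.range m).map (fun u => sE n G (p + 1 + u))).prod =
          ((List.range m).map (fun u => sE n G (p + 1 + u))).prod * eE n G p (n - 1) := by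
        have h := eE_mul_prod (n := n) (G := G) m p (p + 1) (by omega) (by omega)
        rwa [show p + 1 + m = n - 1 by omega] at h
      calc J p * (sE n G p * ((List.range m).map (fun u => sE n G (p + 1 + u))).prod)
          = (J p * sE n G p) * ((List.range m).map (fun u => sE n G (p + 1 + u))).prod := by
            rw [mul_assoc]
        _ = (sE n G p * J (p + 1) - eE n G p (p + 1)) *
              ((List.range m).map (fun u => sE n G (p + 1 + u))).prod := by rw [hK]
        _ = sE n G p * (J (p + 1) * ((List.range m).map (fun u => sE n G (p + 1 + u))).prod) -
              eE n G p (p + 1) * ((List.range m).map (fun u => sE n G (p + 1 + u))).prod := by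
            rw [sub_mul, mul_assoc]
        _ = sE n G p * (((List.range m).map (fun u => sE n G (p + 1 + u))).prod * J (n - 1) -
              ∑ t ∈ Finset.range m,
                ((List.range m).map (fun u => if u = t then 1 else sE n G (p + 1 + u))).prod *
                  eE n G (p + 1 + t) (n - 1)) -
              ((List.range m).map (fun u => sE n G (p + 1 + u))).prod * eE n G p (n - 1) := by
            rw [hIH, hE]
        _ = _ := by rw [mul_sub, ← mul_assoc]; abel

end AuxJM

/-- For the Jucys–Murphy elements of `ℂG̃_n` (0-based: `J p = j̃_{p+1}`), for
`p + 1 < n` one has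
`j̃_{p+1} s_{p+1} ⋯ s_{n−1} = s_{p+1} ⋯ s_{n−1} j̃_n − Σ_k (s_{p+1} ⋯ ŝ_k ⋯ s_{n−1}) e_{k,n}`
(paper's 1-based formula for `l = p+1`), where the hat means the factor is omitted. -/
theorem jucysMurphy_prod_formula (n : ℕ) (G : Type) [Group G] [Fintype G]
    (J : ℕ → MonoidAlgebra ℂ (Wreath n G)) (hn : 0 < n)
    (h0 : J 0 = 0)
    (hrec : ∀ i : ℕ, i + 1 < n →
      J (i + 1) = sE n G i * J i * sE n G i + eE n G i (i + 1) * sE n G i)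
    (p : ℕ) (hp : p + 1 < n) :
    J p * ((List.range (n - 1 - p)).map (fun u => sE n G (p + u))).prod =
      ((List.range (n - 1 - p)).map (fun u => sE n G (p + u))).prod * J (n - 1) -
        ∑ t ∈ Finset.range (n - 1 - p),
          ((List.range (n - 1 - p)).map (fun u => if u = t then 1 else sE n G (p + u))).prod *
            eE n G (p + t) (n - 1) := by
  have h1 : 1 ≤ n - 1 - p := by omega
  have h2 : p + (n - 1 - p) + 1 = n := by omega
  exact main_aux J hrec (n - 1 - p) p h1 h2
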